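/- If the composition operator C_h maps L²(Ω) into itself, then its operator norm equals the square root of the essential supremum of g_h, i.e., ‖C_h‖ = ‖g_h‖_{L^∞}^{1/2}. -/

import Mathlib

open MeasureTheory ENNReal

/-- Lebesgue measure on a subset `Ω` of `ℝ^d`, viewed as a measure on the subtype. -/
noncomputable def lebOn {d : ℕ} (Ω : Set (EuclideanSpace ℝ (Fin d))) : Measure Ω :=
  (volume : Measure (EuclideanSpace ℝ (Fin d))).comap Subtype.val

lemma lebOn_sigmaFinite {d : ℕ} {Ω : Set (EuclideanSpace ℝ (Fin d))}
    (hΩ : MeasurableSet Ω) : SigmaFinite (lebOn Ω) := by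
  have he : MeasurableEmbedding ((↑) : Ω → EuclideanSpace ℝ (Fin d)) :=
    MeasurableEmbedding.subtype_coe hΩ
  refine Measure.FiniteSpanningSetsIn.sigmaFinite
    (⟨fun n => Subtype.val ⁻¹' (spanningSets (volume : Measure (EuclideanSpace ℝ (Fin d))) n),
      fun _ => trivial, fun n => ?_, ?_⟩ :
      (lebOn Ω).FiniteSpanningSetsIn Set.univ)
  · rw [lebOn, he.comap_apply]
    exact (measure_mono (Set.image_preimage_subset _ _)).trans_lt
      (measure_spanningSets_lt_top _ n)
  · rw [← Set.preimage_iUnion, iUnion_spanningSets, Set.preimage_univ]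

theorem composition_operator_norm
    {d : ℕ} (Ω : Set (EuclideanSpace ℝ (Fin d))) (hΩ : IsOpen Ω)
    (h : Ω → Ω) (hm : Measurable h)
    (hac : (lebOn Ω).map h ≪ lebOn Ω)
    (hbd : essSup (((lebOn Ω).map h).rnDeriv (lebOn Ω)) (lebOn Ω) ≠ ⊤)
    (T : Lp ℝ 2 (lebOn Ω) →L[ℝ] Lp ℝ 2 (lebOn Ω))
    (hT : ∀ f : Lp ℝ 2 (lebOn Ω), (T f : Ω → ℝ) =ᵐ[lebOn Ω] fun x => f (h x)) :
    ‖T‖ = Real.sqrt (essSup (((lebOn Ω).map h).rnDeriv (lebOn Ω)) (lebOn Ω)).toReal := by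
  have hΩm : MeasurableSet Ω := hΩ.measurableSet
  haveI hSF : SigmaFinite (lebOn Ω) := lebOn_sigmaFinite hΩm
  set g := ((lebOn Ω).map h).rnDeriv (lebOn Ω) with hgdef
  set S := essSup g (lebOn Ω) with hSdef
  have hgm : Measurable g := Measure.measurable_rnDeriv _ _
  -- composition of a.e. equal functions
  have hcomp : ∀ (f f' : Ω → ℝ), f =ᵐ[lebOn Ω] f' →
      (fun x => f (h x)) =ᵐ[lebOn Ω] fun x => f' (h x) := by
    intro f f' hff
    exact ae_eq_comp hm.aemeasurable (hff.filter_mono hac.ae_le)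
  -- the squared-norm lintegral of a composition
  have key : ∀ f : Lp ℝ 2 (lebOn Ω),
      ∫⁻ x, (‖(f : Ω → ℝ) (h x)‖₊ : ℝ≥0∞) ^ (2:ℝ) ∂(lebOn Ω)
        = ∫⁻ x, (‖(f : Ω → ℝ) x‖₊ : ℝ≥0∞) ^ (2:ℝ) ∂((lebOn Ω).map h) := by
    intro f
    obtain ⟨f', hf'm, hff'⟩ : ∃ f' : Ω → ℝ, Measurable f' ∧ (f : Ω → ℝ) =ᵐ[lebOn Ω] f' :=
      ⟨(Lp.aestronglyMeasurable f).mk _,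
        (Lp.aestronglyMeasurable f).stronglyMeasurable_mk.measurable,
        (Lp.aestronglyMeasurable f).ae_eq_mk⟩
    have hmeas : Measurable fun x => (‖f' x‖₊ : ℝ≥0∞) ^ (2:ℝ) :=
      hf'm.nnnorm.coe_nnreal_ennreal.pow_const _
    calc ∫⁻ x, (‖(f : Ω → ℝ) (h x)‖₊ : ℝ≥0∞) ^ (2:ℝ) ∂(lebOn Ω)
        = ∫⁻ x, (‖f' (h x)‖₊ : ℝ≥0∞) ^ (2:ℝ) ∂(lebOn Ω) :=
          lintegral_congr_ae ((hcomp _ _ hff').mono fun x hx => congrArg (fun r : ℝ => (‖r‖₊ : ℝ≥0∞) ^ (2:ℝ)) hx)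
      _ = ∫⁻ x, (‖f' x‖₊ : ℝ≥0∞) ^ (2:ℝ) ∂((lebOn Ω).map h) := (lintegral_map hmeas hm).symm
      _ = ∫⁻ x, (‖(f : Ω → ℝ) x‖₊ : ℝ≥0∞) ^ (2:ℝ) ∂((lebOn Ω).map h) :=
          lintegral_congr_ae ((hff'.filter_mono hac.ae_le).symm.mono fun x hx => congrArg (fun r : ℝ => (‖r‖₊ : ℝ≥0∞) ^ (2:ℝ)) hx)
  have htwo : (2 : ℝ≥0∞).toReal = (2:ℝ) := by norm_num
  -- upper bound
  have up : ∀ f : Lp ℝ 2 (lebOn Ω), ‖T f‖ ≤ Real.sqrt S.toReal * ‖f‖ := by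
    intro f
    have hAf : AEMeasurable (fun x => (‖(f : Ω → ℝ) x‖₊ : ℝ≥0∞) ^ (2:ℝ)) (lebOn Ω) :=
      (Lp.aestronglyMeasurable f).aemeasurable.nnnorm.coe_nnreal_ennreal.pow_const _
    have h1 : ∫⁻ x, (‖(T f : Ω → ℝ) x‖₊ : ℝ≥0∞) ^ (2:ℝ) ∂(lebOn Ω)
        ≤ S * ∫⁻ x, (‖(f : Ω → ℝ) x‖₊ : ℝ≥0∞) ^ (2:ℝ) ∂(lebOn Ω) := by
      calc ∫⁻ x, (‖(T f : Ω → ℝ) x‖₊ : ℝ≥0∞) ^ (2:ℝ) ∂(lebOn Ω)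
          = ∫⁻ x, (‖(f : Ω → ℝ) (h x)‖₊ : ℝ≥0∞) ^ (2:ℝ) ∂(lebOn Ω) :=
            lintegral_congr_ae ((hT f).mono fun x hx => congrArg (fun r : ℝ => (‖r‖₊ : ℝ≥0∞) ^ (2:ℝ)) hx)
        _ = ∫⁻ x, (‖(f : Ω → ℝ) x‖₊ : ℝ≥0∞) ^ (2:ℝ) ∂((lebOn Ω).map h) := key f
        _ = ∫⁻ x, g x * (‖(f : Ω → ℝ) x‖₊ : ℝ≥0∞) ^ (2:ℝ) ∂(lebOn Ω) :=
            (lintegral_rnDeriv_mul hac hAf).symm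
        _ ≤ ∫⁻ x, S * (‖(f : Ω → ℝ) x‖₊ : ℝ≥0∞) ^ (2:ℝ) ∂(lebOn Ω) :=
            lintegral_mono_ae ((ae_le_essSup g).mono fun x hx =>
              mul_le_mul_left hx _)
        _ = S * ∫⁻ x, (‖(f : Ω → ℝ) x‖₊ : ℝ≥0∞) ^ (2:ℝ) ∂(lebOn Ω) :=
            lintegral_const_mul' _ _ hbd
    have h2 : eLpNorm (T f : Ω → ℝ) 2 (lebOn Ω)
        ≤ S ^ (1/2:ℝ) * eLpNorm (f : Ω → ℝ) 2 (lebOn Ω) := by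
      rw [eLpNorm_eq_lintegral_rpow_enorm_toReal (by norm_num) (by norm_num),
        eLpNorm_eq_lintegral_rpow_enorm_toReal (by norm_num) (by norm_num), htwo,
        ← ENNReal.mul_rpow_of_nonneg _ _ (by norm_num : (0:ℝ) ≤ 1/2)]
      exact ENNReal.rpow_le_rpow h1 (by norm_num)
    calc ‖T f‖ = (eLpNorm (T f : Ω → ℝ) 2 (lebOn Ω)).toReal := Lp.norm_def _
      _ ≤ (S ^ (1/2:ℝ) * eLpNorm (f : Ω → ℝ) 2 (lebOn Ω)).toReal := by
          refine ENNReal.toReal_mono ?_ h2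
          exact ENNReal.mul_ne_top (ENNReal.rpow_ne_top_of_nonneg (by norm_num) hbd)
            (Lp.eLpNorm_ne_top f)
      _ = Real.sqrt S.toReal * ‖f‖ := by
          rw [ENNReal.toReal_mul, Lp.norm_def, Real.sqrt_eq_rpow,
            ENNReal.toReal_rpow]
  -- lower bound
  have low : ∀ c : ℝ≥0∞, c < S → c.toReal ≤ ‖T‖ ^ 2 := by
    intro c hc
    set A : Set Ω := {x | c < g x} with hA
    have hAm : MeasurableSet A := measurableSet_lt measurable_const hgm
    have hApos : 0 < lebOn Ω A := by
      rcases eq_zero_or_pos (lebOn Ω A) with hz | hp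
      · exfalso
        have : ∀ᵐ x ∂(lebOn Ω), g x ≤ c := by
          rw [ae_iff]
          simpa [hA, not_le] using hz
        exact absurd (essSup_le_of_ae_le c this) (not_le.mpr hc)
      · exact hp
    obtain ⟨t, htm, hts, htpos, htfin⟩ := Measure.exists_subset_measure_lt_top hAm hApos
    set f : Lp ℝ 2 (lebOn Ω) := indicatorConstLp 2 htm htfin.ne (1:ℝ) with hf
    have hνt : ∫⁻ x in t, g x ∂(lebOn Ω) = (lebOn Ω).map h t :=
      Measure.setLIntegral_rnDeriv' hac htm
    have hνt_lb : c * lebOn Ω t ≤ (lebOn Ω).map h t := by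
      rw [← hνt]
      calc c * lebOn Ω t = ∫⁻ _ in t, c ∂(lebOn Ω) := (setLIntegral_const t c).symm
        _ ≤ ∫⁻ x in t, g x ∂(lebOn Ω) :=
            setLIntegral_mono hgm fun x hx => (hts hx).le
    have hνt_ub : (lebOn Ω).map h t ≤ S * lebOn Ω t := by
      rw [← hνt]
      calc ∫⁻ x in t, g x ∂(lebOn Ω) ≤ ∫⁻ _ in t, S ∂(lebOn Ω) :=
            lintegral_mono_ae (ae_restrict_of_ae ((ae_le_essSup g)))
        _ = S * lebOn Ω t := setLIntegral_const t S
    have hνt_fin : (lebOn Ω).map h t ≠ ⊤ :=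
      (hνt_ub.trans_lt (ENNReal.mul_lt_top hbd.lt_top htfin)).ne
    have hnf : ‖f‖ = Real.sqrt (lebOn Ω t).toReal := by
      rw [Lp.norm_def, eLpNorm_congr_ae indicatorConstLp_coeFn,
        eLpNorm_indicator_const htm (by norm_num) (by norm_num), htwo]
      simp [Real.sqrt_eq_rpow, ENNReal.toReal_rpow]
    have hTf_ae : (T f : Ω → ℝ) =ᵐ[lebOn Ω] (h ⁻¹' t).indicator fun _ => (1:ℝ) := by
      refine (hT f).trans ?_
      refine ((hcomp _ _ indicatorConstLp_coeFn).trans ?_)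
      refine Filter.EventuallyEq.of_eq (funext fun x => ?_)
      by_cases hx : h x ∈ t <;> simp [Set.indicator_apply, hx]
    have hnTf : ‖T f‖ = Real.sqrt ((lebOn Ω).map h t).toReal := by
      rw [Lp.norm_def, eLpNorm_congr_ae hTf_ae,
        eLpNorm_indicator_const (hm htm) (by norm_num) (by norm_num), htwo,
        Measure.map_apply hm htm]
      simp [Real.sqrt_eq_rpow, ENNReal.toReal_rpow]
    have hle : ‖T f‖ ≤ ‖T‖ * ‖f‖ := T.le_opNorm f
    rw [hnf, hnTf] at hle
    have hsq : ((lebOn Ω).map h t).toReal ≤ ‖T‖ ^ 2 * (lebOn Ω t).toReal := by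
      have := mul_self_le_mul_self (Real.sqrt_nonneg ((lebOn Ω).map h t).toReal) hle
      rw [Real.mul_self_sqrt ENNReal.toReal_nonneg] at this
      calc ((lebOn Ω).map h t).toReal
          ≤ (‖T‖ * Real.sqrt (lebOn Ω t).toReal) *
            (‖T‖ * Real.sqrt (lebOn Ω t).toReal) := this
        _ = ‖T‖ ^ 2 * (Real.sqrt (lebOn Ω t).toReal * Real.sqrt (lebOn Ω t).toReal) := by ring
        _ = ‖T‖ ^ 2 * (lebOn Ω t).toReal := by
            rw [Real.mul_self_sqrt ENNReal.toReal_nonneg]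
    have hlb : c.toReal * (lebOn Ω t).toReal ≤ ((lebOn Ω).map h t).toReal := by
      rw [← ENNReal.toReal_mul]
      exact ENNReal.toReal_mono hνt_fin hνt_lb
    have hbpos : 0 < (lebOn Ω t).toReal := ENNReal.toReal_pos htpos.ne' htfin.ne
    have := hlb.trans hsq
    exact le_of_mul_le_mul_right (by linarith) hbpos
  -- conclude
  have hS_le : S.toReal ≤ ‖T‖ ^ 2 := by
    by_contra hcon
    push_neg at hcon
    have hlt : ENNReal.ofReal (‖T‖ ^ 2) < S := by
      rw [← ENNReal.ofReal_toReal hbd]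
      exact (ENNReal.ofReal_lt_ofReal_iff_of_nonneg (sq_nonneg _)).2 hcon
    obtain ⟨c, hc1, hc2⟩ := exists_between hlt
    have h3 := low c hc2
    have hc1' : ‖T‖ ^ 2 < c.toReal := by
      have hcne : c ≠ ⊤ := (hc2.trans_le le_top).ne
      have := ENNReal.toReal_strict_mono hcne hc1
      rwa [ENNReal.toReal_ofReal (sq_nonneg _)] at this
    linarith
  refine le_antisymm (T.opNorm_le_bound (Real.sqrt_nonneg _) up) ?_
  calc Real.sqrt S.toReal ≤ Real.sqrt (‖T‖ ^ 2) := Real.sqrt_le_sqrt hS_le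
    _ = ‖T‖ := Real.sqrt_sq (norm_nonneg _)
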